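/- Let A ∈ ℝ^{n×n} be symmetric positive semidefinite, b ∈ ℝ^n with Ax = b consistent, and x* any solution. Fix S ⊆ [n] of size d and let A° := A − A⟨S⟩ with A⟨S⟩ := A_{:,S} (A_{S,S})† A_{S,:}; assume A°_{j,j} > 0 for exactly the n − d coordinates j ∉ S. Let D be the diagonal matrix with D_{j,j} = A°_{j,j}, and let {x^k}_{k≥0} be the SC-RCD iterates with pivot set S, where each block J consists of ℓ coordinates sampled independently and uniformly at random from {j ∈ [n] : A°_{j,j} > 0}. Then E||x^k − x*||_A² ≤ (1 − λmin⁺(D^{†/2} A° D^{†/2}) / (n − d))^{kℓ} · ||x^0 − x*||_A². -/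

import Mathlib

open Matrix

/-- `Mp` is the Moore–Penrose pseudoinverse of `M` (the four Penrose conditions,
which characterize it uniquely). -/
def IsMoorePenrose {k l : Type*} [Fintype k] [Fintype l]
    (M : Matrix k l ℝ) (Mp : Matrix l k ℝ) : Prop :=
  M * Mp * M = M ∧ Mp * M * Mp = Mp ∧ (M * Mp)ᵀ = M * Mp ∧ (Mp * M)ᵀ = Mp * M

/-- The smallest nonzero eigenvalue of a square real matrix
(with junk value `sInf ∅ = 0` if every eigenvalue is zero). -/
noncomputable def lamMinPos {n : ℕ} (M : Matrix (Fin n) (Fin n) ℝ) : ℝ :=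
  sInf {μ : ℝ | μ ≠ 0 ∧ ∃ v : Fin n → ℝ, v ≠ 0 ∧ M *ᵥ v = μ • v}

/-- The trajectory of an iterative method: `traj step x0 k ω` is the `k`-th iterate
obtained from `x0` using the random draws `ω 0, …, ω (k-1)`. -/
def traj {V I : Type*} (step : I → V → V) (x0 : V) : (k : ℕ) → (Fin k → I) → V
  | 0, _ => x0
  | k + 1, ω => step (ω (Fin.last k)) (traj step x0 k (Fin.init ω))

namespace SCRCDaux

lemma herm_transpose {m : Type*} [Fintype m] {M : Matrix m m ℝ} (h : M.IsHermitian) : Mᵀ = M := by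
  rw [← Matrix.conjTranspose_eq_transpose_of_trivial]; exact h

lemma psd_quad {m : Type*} [Fintype m] {M : Matrix m m ℝ} (h : M.PosSemidef) (x : m → ℝ) :
    0 ≤ x ⬝ᵥ (M *ᵥ x) := by
  simpa using h.dotProduct_mulVec_nonneg x

lemma psd_congr {m k : Type*} [Fintype m] [Fintype k] {M : Matrix m m ℝ} (h : M.PosSemidef)
    (B : Matrix k m ℝ) : (B * M * Bᵀ).PosSemidef := by
  simpa [Matrix.conjTranspose_eq_transpose_of_trivial] using h.mul_mul_conjTranspose_same B

open scoped MatrixOrder in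
lemma psd_cancel {m k : Type*} [Fintype m] [Fintype k] [DecidableEq m]
    {M : Matrix m m ℝ} (h : M.PosSemidef)
    (B : Matrix k m ℝ) (hB : B * M * Bᵀ = 0) : B * M = 0 := by
  obtain ⟨R, hR⟩ := CStarAlgebra.nonneg_iff_eq_star_mul_self.mp h.nonneg
  have h1 : (B * Rᴴ) * (B * Rᴴ)ᴴ = 0 := by
    rw [Matrix.conjTranspose_mul, Matrix.conjTranspose_conjTranspose,
      Matrix.conjTranspose_eq_transpose_of_trivial B, ← hB, hR, Matrix.star_eq_conjTranspose]
    simp only [Matrix.mul_assoc]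
  have h2 : B * Rᴴ = 0 := Matrix.self_mul_conjTranspose_eq_zero.mp h1
  rw [hR, Matrix.star_eq_conjTranspose, ← Matrix.mul_assoc, h2, Matrix.zero_mul]

lemma mem_nonneg {n : ℕ} {B : Matrix (Fin n) (Fin n) ℝ} (hB : B.PosSemidef) :
    ∀ μ ∈ {μ : ℝ | μ ≠ 0 ∧ ∃ v : Fin n → ℝ, v ≠ 0 ∧ B *ᵥ v = μ • v}, 0 ≤ μ := by
  rintro μ ⟨hμ, v, hv, hEv⟩
  have h1 : v ⬝ᵥ (B *ᵥ v) = μ * (v ⬝ᵥ v) := by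
    rw [hEv, dotProduct_smul]; rfl
  have hne : v ⬝ᵥ v ≠ 0 := fun h => hv (dotProduct_self_eq_zero.mp h)
  have hnn : 0 ≤ v ⬝ᵥ v := Finset.sum_nonneg fun i _ => mul_self_nonneg (v i)
  have h2 : 0 < v ⬝ᵥ v := lt_of_le_of_ne hnn (Ne.symm hne)
  have h3 := psd_quad hB v
  rw [h1] at h3
  nlinarith

lemma lamMinPos_nonneg {n : ℕ} {B : Matrix (Fin n) (Fin n) ℝ} (hB : B.PosSemidef) :
    0 ≤ lamMinPos B :=
  Real.sInf_nonneg (mem_nonneg hB)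

lemma lamMinPos_le {n : ℕ} {B : Matrix (Fin n) (Fin n) ℝ} (hB : B.PosSemidef)
    {μ : ℝ} (hμ : μ ≠ 0) {v : Fin n → ℝ} (hv : v ≠ 0) (hEv : B *ᵥ v = μ • v) :
    lamMinPos B ≤ μ := by
  apply csInf_le
  · exact ⟨0, fun x hx => mem_nonneg hB x hx⟩
  · exact ⟨hμ, v, hv, hEv⟩

lemma spectral_key {n : ℕ} {B : Matrix (Fin n) (Fin n) ℝ} (hB : B.PosSemidef) :
    (B * B - lamMinPos B • B).PosSemidef := by
  have hH : B.IsHermitian := hB.1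
  set f := hH.eigenvalues with hf
  set U : Matrix (Fin n) (Fin n) ℝ := (hH.eigenvectorUnitary : Matrix (Fin n) (Fin n) ℝ) with hUdef
  have hVU : star U * U = 1 := Matrix.mem_unitaryGroup_iff'.mp hH.eigenvectorUnitary.2
  have hs : B = U * Matrix.diagonal f * star U := by
    have := hH.spectral_theorem
    simpa using this
  set lam := lamMinPos B with hlam
  have hdiagsmul : Matrix.diagonal (fun i => lam * f i) = lam • Matrix.diagonal f := by
    ext i j
    by_cases h : i = j <;> simp [Matrix.diagonal_apply, h]
  have key : B * B - lam • B =
      U * Matrix.diagonal (fun i => f i * f i - lam * f i) * star U := by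
    have h1 : B * B = U * (Matrix.diagonal f * Matrix.diagonal f) * star U := by
      rw [hs]
      simp only [Matrix.mul_assoc]
      rw [← Matrix.mul_assoc (star U) U, hVU, Matrix.one_mul]
    have h2 : lam • B = U * Matrix.diagonal (fun i => lam * f i) * star U := by
      rw [hdiagsmul, hs, Matrix.mul_smul, Matrix.smul_mul]
    have h3 : Matrix.diagonal (fun i => f i * f i - lam * f i)
        = Matrix.diagonal f * Matrix.diagonal f - Matrix.diagonal (fun i => lam * f i) := by
      rw [Matrix.diagonal_mul_diagonal, ← Matrix.diagonal_sub]
    rw [h1, h2, h3, Matrix.mul_sub, Matrix.sub_mul]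
  have hdnn : ∀ i, 0 ≤ f i * f i - lam * f i := by
    intro i
    by_cases hfi : f i = 0
    · simp [hfi]
    · have hge : 0 ≤ f i := hB.eigenvalues_nonneg i
      have hvne : (⇑(hH.eigenvectorBasis i) : Fin n → ℝ) ≠ 0 := by
        intro h0
        exact hH.eigenvectorBasis.orthonormal.ne_zero i (by ext x; exact congrFun h0 x)
      have hle : lam ≤ f i := lamMinPos_le hB hfi hvne (hH.mulVec_eigenvectorBasis i)
      nlinarith
  have hdpsd : (Matrix.diagonal (fun i => f i * f i - lam * f i)).PosSemidef :=
    Matrix.posSemidef_diagonal_iff.mpr hdnn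
  rw [key, Matrix.star_eq_conjTranspose, Matrix.conjTranspose_eq_transpose_of_trivial]
  exact psd_congr hdpsd U

lemma mp_unique {k : Type*} [Fintype k] {M P Q : Matrix k k ℝ}
    (hP : IsMoorePenrose M P) (hQ : IsMoorePenrose M Q) : P = Q := by
  obtain ⟨hP1, hP2, hP3, hP4⟩ := hP
  obtain ⟨hQ1, hQ2, hQ3, hQ4⟩ := hQ
  have t1 : Mᵀ * Qᵀ * Mᵀ = Mᵀ := by
    have := congrArg Matrix.transpose hQ1
    rwa [Matrix.transpose_mul, Matrix.transpose_mul, ← Matrix.mul_assoc] at this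
  have hMP : M * P = M * Q := by
    calc M * P = (M * P)ᵀ := hP3.symm
    _ = Pᵀ * Mᵀ := by rw [Matrix.transpose_mul]
    _ = Pᵀ * (Mᵀ * Qᵀ * Mᵀ) := by rw [t1]
    _ = (Pᵀ * Mᵀ) * (Qᵀ * Mᵀ) := by simp only [Matrix.mul_assoc]
    _ = (M * P)ᵀ * (M * Q)ᵀ := by rw [Matrix.transpose_mul, Matrix.transpose_mul]
    _ = (M * P) * (M * Q) := by rw [hP3, hQ3]
    _ = (M * P * M) * Q := by simp only [Matrix.mul_assoc]
    _ = M * Q := by rw [hP1]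
  have hPM : P * M = Q * M := by
    calc P * M = (P * M)ᵀ := hP4.symm
    _ = Mᵀ * Pᵀ := by rw [Matrix.transpose_mul]
    _ = (Mᵀ * Qᵀ * Mᵀ) * Pᵀ := by rw [t1]
    _ = (Mᵀ * Qᵀ) * (Mᵀ * Pᵀ) := by simp only [Matrix.mul_assoc]
    _ = (Q * M)ᵀ * (P * M)ᵀ := by rw [Matrix.transpose_mul, Matrix.transpose_mul]
    _ = (Q * M) * (P * M) := by rw [hP4, hQ4]
    _ = Q * (M * P * M) := by simp only [Matrix.mul_assoc]
    _ = Q * M := by rw [hP1]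
  calc P = P * M * P := hP2.symm
  _ = Q * M * P := by rw [hPM]
  _ = Q * (M * P) := by rw [Matrix.mul_assoc]
  _ = Q * (M * Q) := by rw [hMP]
  _ = Q * M * Q := by rw [Matrix.mul_assoc]
  _ = Q := hQ2

lemma mp_transpose {k : Type*} [Fintype k] {M P : Matrix k k ℝ}
    (hM : Mᵀ = M) (hP : IsMoorePenrose M P) : Pᵀ = P := by
  obtain ⟨h1, h2, h3, h4⟩ := hP
  have hPt : IsMoorePenrose M Pᵀ := by
    refine ⟨?_, ?_, ?_, ?_⟩
    · have := congrArg Matrix.transpose h1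
      rwa [Matrix.transpose_mul, Matrix.transpose_mul, hM, ← Matrix.mul_assoc] at this
    · have := congrArg Matrix.transpose h2
      rwa [Matrix.transpose_mul, Matrix.transpose_mul, hM, ← Matrix.mul_assoc] at this
    · have e : (M * Pᵀ)ᵀ = P * M := by rw [Matrix.transpose_mul, Matrix.transpose_transpose, hM]
      rw [e]
      calc P * M = (P * M)ᵀ := h4.symm
      _ = Mᵀ * Pᵀ := by rw [Matrix.transpose_mul]
      _ = M * Pᵀ := by rw [hM]
    · have e : (Pᵀ * M)ᵀ = M * P := by rw [Matrix.transpose_mul, Matrix.transpose_transpose, hM]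
      rw [e]
      calc M * P = (M * P)ᵀ := h3.symm
      _ = Pᵀ * Mᵀ := by rw [Matrix.transpose_mul]
      _ = Pᵀ * M := by rw [hM]
  exact mp_unique hPt ⟨h1, h2, h3, h4⟩

lemma dotshift {a b : Type*} [Fintype a] [Fintype b] (N : Matrix a b ℝ) (v : b → ℝ) (w : a → ℝ) :
    (N *ᵥ v) ⬝ᵥ w = v ⬝ᵥ (Nᵀ *ᵥ w) := by
  rw [dotProduct_comm, dotProduct_mulVec, ← Matrix.mulVec_transpose, dotProduct_comm,
    dotProduct_mulVec, ← Matrix.mulVec_transpose, Matrix.transpose_transpose]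

end SCRCDaux

set_option maxHeartbeats 1000000 in
open SCRCDaux in
/-- SC-RCD convergence, uniform sampling. With `|S| = d`, diagonal
entries of the Nyström residual `A°` positive exactly off `S`, `D = diag(A°)`, and
blocks of `ℓ` coordinates sampled i.i.d. uniformly from `{j : A°_{j,j} > 0}`, the
SC-RCD iterates satisfy
`E‖x^k − x*‖_A² ≤ (1 − λmin⁺(D^{†/2} A° D^{†/2})/(n − d))^{kℓ} ‖x^0 − x*‖_A²`. -/
theorem stmt_13 {n l d : ℕ}
    (A : Matrix (Fin n) (Fin n) ℝ) (hA : A.PosSemidef)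
    (b : Fin n → ℝ) (hconsistent : ∃ x, A *ᵥ x = b)
    (xstar : Fin n → ℝ) (hxstar : A *ᵥ xstar = b)
    (S : Finset (Fin n)) (hcard : S.card = d)
    -- `W = (A_{S,S})†`
    (W : Matrix {j // j ∈ S} {j // j ∈ S} ℝ)
    (hW : IsMoorePenrose (A.submatrix (fun j : {j // j ∈ S} => (j : Fin n))
      (fun j : {j // j ∈ S} => (j : Fin n))) W)
    -- the Nyström residual `A° = A − A_{:,S}(A_{S,S})†A_{S,:}`
    (Ao : Matrix (Fin n) (Fin n) ℝ)
    (hAo : Ao = A - A.submatrix id (fun j : {j // j ∈ S} => (j : Fin n)) * W *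
      A.submatrix (fun j : {j // j ∈ S} => (j : Fin n)) id)
    -- `A°_{j,j} > 0` for exactly the `n − d` coordinates `j ∉ S`
    (hdiag : ∀ j : Fin n, 0 < Ao j j ↔ j ∉ S)
    -- `D = diag(A°)` and its pseudoinverse square root `D^{†/2}`
    (D : Matrix (Fin n) (Fin n) ℝ) (hD : D = Matrix.diagonal fun j => Ao j j)
    (Dhi : Matrix (Fin n) (Fin n) ℝ)
    (hDhi : Dhi = Matrix.diagonal fun j => (Real.sqrt (Ao j j))⁻¹)
    -- the auxiliary matrix `C = (A_{S,S})† A_{S,:}`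
    (C : Matrix {j // j ∈ S} (Fin n) ℝ)
    (hC : C = W * A.submatrix (fun j : {j // j ∈ S} => (j : Fin n)) id)
    -- `pJ J = (A°_{J,J})†` for a block `J` of `ℓ` coordinates
    (pJ : (Fin l → Fin n) → Matrix (Fin l) (Fin l) ℝ)
    (hpJ : ∀ J : Fin l → Fin n, IsMoorePenrose (Ao.submatrix J J) (pJ J))
    -- coordinate selection matrices `e_S` and `e_J`
    (eS : Matrix (Fin n) {j // j ∈ S} ℝ)
    (heS : eS = Matrix.of fun i j => if i = j.val then 1 else 0)
    (eJ : (Fin l → Fin n) → Matrix (Fin n) (Fin l) ℝ)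
    (heJ : ∀ J, eJ J = Matrix.of fun i t => if i = J t then 1 else 0)
    -- the SC-RCD update: `x^{k+1} = x^k − e_J α + e_S β` with `α = (A°_{J,J})† r_J`,
    -- `β = C_{:,J} α`, and `r = A x^k − b`
    (step : (Fin l → Fin n) → (Fin n → ℝ) → (Fin n → ℝ))
    (hstep : ∀ (J : Fin l → Fin n) (x : Fin n → ℝ),
      step J x = x - eJ J *ᵥ (pJ J *ᵥ fun t => (A *ᵥ x - b) (J t))
        + eS *ᵥ (C.submatrix id J *ᵥ (pJ J *ᵥ fun t => (A *ᵥ x - b) (J t))))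
    -- `x0` solves the subsystem `A_{S,:} x = b_S`
    (x0 : Fin n → ℝ)
    (hx0 : A.submatrix (fun j : {j // j ∈ S} => (j : Fin n)) id *ᵥ x0 =
      fun j : {j // j ∈ S} => b j)
    -- uniform sampling probabilities on `{j : A°_{j,j} > 0}`
    (p : Fin n → ℝ)
    (hp : ∀ j, p j = if 0 < Ao j j then ((n : ℝ) - d)⁻¹ else 0) :
    ∀ k : ℕ,
      ∑ ω : Fin k → (Fin l → Fin n), (∏ i, ∏ t, p (ω i t)) *
          ((traj step x0 k ω - xstar) ⬝ᵥ (A *ᵥ (traj step x0 k ω - xstar))) ≤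
        (1 - lamMinPos (Dhi * Ao * Dhi) / ((n : ℝ) - d)) ^ (k * l) *
          ((x0 - xstar) ⬝ᵥ (A *ᵥ (x0 - xstar))) := by
  -- abbreviations
  have hAsym : Aᵀ = A := herm_transpose hA.1
  -- selector conversions
  have heSr : ∀ {m : Type} (M : Matrix m (Fin n) ℝ),
      M * eS = M.submatrix id (fun j : {j // j ∈ S} => (j : Fin n)) := by
    intro m M
    ext i s
    simp [heS, Matrix.mul_apply]
  have heSl : ∀ {m : Type} (M : Matrix (Fin n) m ℝ),
      eSᵀ * M = M.submatrix (fun j : {j // j ∈ S} => (j : Fin n)) id := by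
    intro m M
    ext s j
    simp [heS, Matrix.mul_apply]
  have heSv : ∀ v : Fin n → ℝ, eSᵀ *ᵥ v = fun s : {j // j ∈ S} => v (s : Fin n) := by
    intro v
    ext s
    simp [heS, Matrix.mulVec, dotProduct]
  have heJr : ∀ {m : Type} (M : Matrix m (Fin n) ℝ) (J : Fin l → Fin n),
      M * eJ J = M.submatrix id J := by
    intro m M J
    ext i t
    simp [heJ, Matrix.mul_apply]
  have heJl : ∀ {m : Type} (M : Matrix (Fin n) m ℝ) (J : Fin l → Fin n),
      (eJ J)ᵀ * M = M.submatrix J id := by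
    intro m M J
    ext t j
    simp [heJ, Matrix.mul_apply]
  have heJv : ∀ (J : Fin l → Fin n) (v : Fin n → ℝ),
      (eJ J)ᵀ *ᵥ v = fun t => v (J t) := by
    intro J v
    ext t
    simp [heJ, Matrix.mulVec, dotProduct]
  -- basic algebraic facts about `Ass`, `W`, `Ao`
  have hW' : IsMoorePenrose (eSᵀ * A * eS) W := by
    have hAssE : eSᵀ * A * eS
        = A.submatrix (fun j : {j // j ∈ S} => (j : Fin n)) (fun j : {j // j ∈ S} => (j : Fin n)) := by
      rw [heSl, heSr]
      simp [Matrix.submatrix_submatrix]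
    rw [hAssE]
    exact hW
  have hTt : (eSᵀ * A * eS)ᵀ = eSᵀ * A * eS := by
    rw [Matrix.transpose_mul, Matrix.transpose_mul, Matrix.transpose_transpose, hAsym,
      Matrix.mul_assoc]
  have hWt : Wᵀ = W := mp_transpose hTt hW'
  have hAoE : Ao = A - A * eS * W * (eSᵀ * A) := by
    rw [hAo, ← heSr (M := A), ← heSl (M := A)]
  have hP1' : eSᵀ * (A * (eS * (W * (eSᵀ * (A * eS))))) = eSᵀ * (A * eS) := by
    simpa only [Matrix.mul_assoc] using hW'.1
  have hkeyN : (eSᵀ - (eSᵀ * A * eS) * W * eSᵀ) * A * (eSᵀ - (eSᵀ * A * eS) * W * eSᵀ)ᵀ = 0 := by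
    have htr : (eSᵀ - (eSᵀ * A * eS) * W * eSᵀ)ᵀ = eS - eS * (W * (eSᵀ * (A * eS))) := by
      rw [Matrix.transpose_sub, Matrix.transpose_transpose, Matrix.transpose_mul,
        Matrix.transpose_transpose, Matrix.transpose_mul, hWt, hTt]
      simp only [Matrix.mul_assoc]
    rw [htr]
    simp only [Matrix.sub_mul, Matrix.mul_sub, Matrix.mul_assoc, hP1']
    abel
  have hSAo : eSᵀ * Ao = 0 := by
    have h := psd_cancel hA (B := eSᵀ - (eSᵀ * A * eS) * W * eSᵀ) hkeyN
    rw [hAoE]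
    simp only [Matrix.sub_mul, Matrix.mul_sub, Matrix.mul_assoc] at h ⊢
    simpa using h
  have hAosym : Aoᵀ = Ao := by
    rw [hAoE]
    simp only [Matrix.transpose_sub, Matrix.transpose_mul, Matrix.transpose_transpose,
      hAsym, hWt, Matrix.mul_assoc]
  have hrow : ∀ s ∈ S, ∀ i, Ao s i = 0 := by
    intro s hs i
    have hSAo' := hSAo
    rw [heSl] at hSAo'
    have h0 := congrFun (congrFun hSAo' ⟨s, hs⟩) i
    simpa using h0
  have hcol : ∀ s ∈ S, ∀ i, Ao i s = 0 := by
    intro s hs i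
    have : Ao i s = Aoᵀ s i := rfl
    rw [this, hAosym]
    exact hrow s hs i
  set Pf : Matrix (Fin n) (Fin n) ℝ := 1 - eS * C with hPfdef
  have hCE : C = W * (eSᵀ * A) := by rw [hC, ← heSl (M := A)]
  have hAPf : A * Pf = Ao := by
    rw [hPfdef, Matrix.mul_sub, Matrix.mul_one, hAoE, hCE]
    simp only [Matrix.mul_assoc]
  have hPftA : Pfᵀ * A = Ao := by
    calc Pfᵀ * A = (Aᵀ * Pf)ᵀ := by rw [Matrix.transpose_mul, Matrix.transpose_transpose]
    _ = (A * Pf)ᵀ := by rw [hAsym]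
    _ = Ao := by rw [hAPf, hAosym]
  have hAoeS : Ao * eS = 0 := by
    have h0 : (eSᵀ * Ao)ᵀ = 0 := by rw [hSAo]; simp
    rwa [Matrix.transpose_mul, Matrix.transpose_transpose, hAosym] at h0
  have hAoPf : Ao * Pf = Ao := by
    rw [hPfdef, Matrix.mul_sub, Matrix.mul_one, ← Matrix.mul_assoc, hAoeS, Matrix.zero_mul,
      sub_zero]
  have hPftAo : Pfᵀ * Ao = Ao := by
    calc Pfᵀ * Ao = (Aoᵀ * Pf)ᵀ := by rw [Matrix.transpose_mul, Matrix.transpose_transpose]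
    _ = (Ao * Pf)ᵀ := by rw [hAosym]
    _ = Ao := by rw [hAoPf, hAosym]
  have hPfAPf : Pfᵀ * A * Pf = Ao := by rw [hPftA, hAoPf]
  have hAopsd : Ao.PosSemidef := by
    have h0 := psd_congr hA Pfᵀ
    rw [Matrix.transpose_transpose, hPfAPf] at h0
    exact h0
  have hdiag0 : ∀ j : Fin n, ¬ 0 < Ao j j → Ao j j = 0 := by
    intro j hj
    exact hrow j (not_not.mp (fun h => hj ((hdiag j).mpr h))) j
  have hcolA : ∀ j, A *ᵥ (fun i => Pf i j) = fun i => Ao i j := by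
    intro j
    funext i
    rw [← hAPf]
    simp [Matrix.mulVec, Matrix.mul_apply, dotProduct]
  set lam := lamMinPos (Dhi * Ao * Dhi) with hlamdef
  have hDhit : Dhiᵀ = Dhi := by rw [hDhi]; exact Matrix.diagonal_transpose _
  have hBpsd : (Dhi * Ao * Dhi).PosSemidef := by
    have h0 := psd_congr hAopsd Dhi
    rwa [hDhit] at h0
  set Dh : Matrix (Fin n) (Fin n) ℝ := Matrix.diagonal (fun j => Real.sqrt (Ao j j)) with hDhdef
  set pim : Matrix (Fin n) (Fin n) ℝ :=
    Matrix.diagonal (fun j => if 0 < Ao j j then (1:ℝ) else 0) with hpim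
  have hent : ∀ j, Real.sqrt (Ao j j) * (Real.sqrt (Ao j j))⁻¹
      = (if 0 < Ao j j then (1:ℝ) else 0) := by
    intro j
    by_cases h : 0 < Ao j j
    · rw [if_pos h]; exact mul_inv_cancel₀ (ne_of_gt (Real.sqrt_pos.mpr h))
    · rw [if_neg h, hdiag0 j h]; simp
  have hDhDhi : Dh * Dhi = pim := by
    rw [hDhdef, hDhi, Matrix.diagonal_mul_diagonal, hpim]
    exact congrArg Matrix.diagonal (funext fun j => hent j)
  have hDhiDh : Dhi * Dh = pim := by
    rw [hDhdef, hDhi, Matrix.diagonal_mul_diagonal, hpim]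
    exact congrArg Matrix.diagonal (funext fun j => by rw [mul_comm]; exact hent j)
  have hpimAo : pim * Ao = Ao := by
    ext i j2
    rw [hpim, Matrix.diagonal_mul]
    by_cases h : 0 < Ao i i
    · rw [if_pos h, one_mul]
    · rw [if_neg h, zero_mul]
      exact (hrow i (not_not.mp (fun hn => h ((hdiag i).mpr hn))) j2).symm
  have hAopim : Ao * pim = Ao := by
    ext i j2
    rw [hpim, Matrix.mul_diagonal]
    by_cases h : 0 < Ao j2 j2
    · rw [if_pos h, mul_one]
    · rw [if_neg h, mul_zero]
      exact (hcol j2 (not_not.mp (fun hn => h ((hdiag j2).mpr hn))) i).symm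
  have hDhipim : Dhi * pim = Dhi := by
    rw [hDhi, hpim, Matrix.diagonal_mul_diagonal]
    refine congrArg Matrix.diagonal (funext fun j => ?_)
    by_cases h : 0 < Ao j j
    · rw [if_pos h, mul_one]
    · rw [if_neg h, mul_zero, hdiag0 j h]; simp
  have hpimDh : pim * Dh = Dh := by
    rw [hDhdef, hpim, Matrix.diagonal_mul_diagonal]
    refine congrArg Matrix.diagonal (funext fun j => ?_)
    by_cases h : 0 < Ao j j
    · rw [if_pos h, one_mul]
    · rw [if_neg h, zero_mul, hdiag0 j h]; simp
  have hAoDhi : Ao * Dhi = Dh * (Dhi * Ao * Dhi) := by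
    have h0 : Dh * (Dhi * Ao * Dhi) = ((Dh * Dhi) * Ao) * Dhi := by
      simp only [Matrix.mul_assoc]
    rw [h0, hDhDhi, hpimAo]
  have hDhiAo : Dhi * Ao = (Dhi * Ao * Dhi) * Dh := by
    have h0 : (Dhi * Ao * Dhi) * Dh = (Dhi * Ao) * (Dhi * Dh) := by
      simp only [Matrix.mul_assoc]
    rw [h0, hDhiDh, Matrix.mul_assoc, hAopim]
  have hDhBDh : Dh * (Dhi * Ao * Dhi) * Dh = Ao := by
    rw [← hAoDhi, Matrix.mul_assoc, hDhiDh, hAopim]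
  have hDht : Dhᵀ = Dh := by rw [hDhdef]; exact Matrix.diagonal_transpose _
  have hkeymat : Ao * (Dhi * Dhi) * Ao - lam • Ao
      = Dh * ((Dhi * Ao * Dhi) * (Dhi * Ao * Dhi) - lam • (Dhi * Ao * Dhi)) * Dh := by
    rw [Matrix.mul_sub, Matrix.sub_mul]
    congr 1
    · calc Ao * (Dhi * Dhi) * Ao = (Ao * Dhi) * (Dhi * Ao) := by simp only [Matrix.mul_assoc]
      _ = (Dh * (Dhi * Ao * Dhi)) * ((Dhi * Ao * Dhi) * Dh) := by rw [← hAoDhi, ← hDhiAo]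
      _ = Dh * ((Dhi * Ao * Dhi) * (Dhi * Ao * Dhi)) * Dh := by simp only [Matrix.mul_assoc]
    · rw [Matrix.mul_smul, Matrix.smul_mul, hDhBDh]
  have hCOREpsd : (Ao * (Dhi * Dhi) * Ao - lam • Ao).PosSemidef := by
    rw [hkeymat]
    have h0 := psd_congr (spectral_key hBpsd) Dh
    rwa [hDht] at h0
  have hsymdot : ∀ (M : Matrix (Fin n) (Fin n) ℝ), Mᵀ = M → ∀ v w,
      v ⬝ᵥ (M *ᵥ w) = (M *ᵥ v) ⬝ᵥ w := by
    intro M hM v w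
    exact (by rw [dotshift, hM] : (M *ᵥ v) ⬝ᵥ w = v ⬝ᵥ (M *ᵥ w)).symm
  have hCORE : ∀ y : Fin n → ℝ,
      lam * (y ⬝ᵥ (Ao *ᵥ y)) ≤ (Dhi *ᵥ (Ao *ᵥ y)) ⬝ᵥ (Dhi *ᵥ (Ao *ᵥ y)) := by
    intro y
    have h0 := psd_quad hCOREpsd y
    rw [Matrix.sub_mulVec, dotProduct_sub, Matrix.smul_mulVec, dotProduct_smul,
      smul_eq_mul] at h0
    have h1 : y ⬝ᵥ ((Ao * (Dhi * Dhi) * Ao) *ᵥ y)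
        = (Dhi *ᵥ (Ao *ᵥ y)) ⬝ᵥ (Dhi *ᵥ (Ao *ᵥ y)) := by
      have e0 : (Ao * (Dhi * Dhi) * Ao) *ᵥ y = Ao *ᵥ (Dhi *ᵥ (Dhi *ᵥ (Ao *ᵥ y))) := by
        simp only [Matrix.mulVec_mulVec, Matrix.mul_assoc]
      rw [e0, hsymdot Ao hAosym, hsymdot Dhi hDhit]
    rw [h1] at h0
    linarith
  -- invariant and single-coordinate step
  set Inv : (Fin n → ℝ) → Prop := fun y => ∀ s ∈ S, (A *ᵥ y) s = 0 with hInvdef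
  have hAoy : ∀ y, Inv y → Ao *ᵥ y = A *ᵥ y := by
    intro y hy
    rw [hAoE, Matrix.sub_mulVec]
    have h0 : (A * eS * W * (eSᵀ * A)) *ᵥ y = (A * eS * W) *ᵥ (eSᵀ *ᵥ (A *ᵥ y)) := by
      simp only [Matrix.mulVec_mulVec, Matrix.mul_assoc]
    rw [h0, heSv]
    have h1 : (fun s : {j // j ∈ S} => (A *ᵥ y) (s : Fin n)) = 0 := funext fun s => hy s s.2
    rw [h1, Matrix.mulVec_zero, sub_zero]
  have hAoent : ∀ i j2, Ao i j2 = Ao j2 i := by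
    intro i j2
    conv_lhs => rw [← hAosym]
    exact Matrix.transpose_apply Ao i j2
  set g : (Fin n → ℝ) → Fin n → (Fin n → ℝ) :=
    fun y j => y - (((A *ᵥ y) j) / Ao j j) • (fun i => Pf i j) with hgdef
  have hginv : ∀ y j, Inv y → Inv (g y j) := by
    intro y j hy s hs
    rw [hgdef]
    simp only [Matrix.mulVec_sub, Matrix.mulVec_smul, hcolA, Pi.sub_apply, Pi.smul_apply,
      smul_eq_mul]
    rw [hy s hs, hrow s hs j, mul_zero, sub_zero]
  have hePf : ∀ j, (fun i => Pf i j) ⬝ᵥ (A *ᵥ (fun i => Pf i j)) = Ao j j := by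
    intro j
    rw [hcolA]
    have h2 : (fun i => Pf i j) ⬝ᵥ (fun i => Ao i j) = (Pfᵀ * Ao) j j := by
      simp [dotProduct, Matrix.mul_apply, Matrix.transpose_apply]
    rw [h2, hPftAo]
  have hgid : ∀ y j, Inv y → (g y j) ⬝ᵥ (A *ᵥ (g y j))
      = y ⬝ᵥ (A *ᵥ y) - ((A *ᵥ y) j)^2 / Ao j j := by
    intro y j hy
    have e3 := hePf j
    have e1 : y ⬝ᵥ (A *ᵥ (fun i => Pf i j)) = (A *ᵥ y) j := by
      rw [hcolA, ← hAoy y hy]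
      simp only [dotProduct, Matrix.mulVec]
      apply Finset.sum_congr rfl
      intro i _
      rw [mul_comm, hAoent i j]
    have e2 : (fun i => Pf i j) ⬝ᵥ (A *ᵥ y) = (A *ᵥ y) j := by
      have h2 : (fun i => Pf i j) ⬝ᵥ (A *ᵥ y) = (Pfᵀ *ᵥ (A *ᵥ y)) j := by
        simp [dotProduct, Matrix.mulVec, Matrix.transpose_apply]
      rw [h2, Matrix.mulVec_mulVec, hPftA, hAoy y hy]
    rw [hgdef]
    simp only [Matrix.mulVec_sub, Matrix.mulVec_smul, dotProduct_sub, sub_dotProduct,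
      dotProduct_smul, smul_dotProduct, smul_eq_mul, e1, e2, e3]
    by_cases h : 0 < Ao j j
    · field_simp
      ring
    · have ha : Ao j j = 0 := hdiag0 j h
      have hr : (A *ᵥ y) j = 0 := hy j (not_not.mp (fun hn => h ((hdiag j).mpr hn)))
      rw [ha, hr]
      simp
  -- counting facts
  have hdlen : d ≤ n := by
    rw [← hcard]
    simpa [Fintype.card_fin] using Finset.card_le_univ S
  have hnd0 : (0:ℝ) ≤ (n:ℝ) - d := by
    have : (d:ℝ) ≤ (n:ℝ) := by exact_mod_cast hdlen
    linarith
  have hcompl : (Sᶜ : Finset (Fin n)).card = n - d := by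
    rw [Finset.card_compl, hcard, Fintype.card_fin]
  have hcomplcast : ((Sᶜ : Finset (Fin n)).card : ℝ) = (n:ℝ) - d := by
    rw [hcompl]
    exact Nat.cast_sub hdlen
  have htermle : ∀ y, Inv y → ∀ j, ((A *ᵥ y) j)^2 / Ao j j ≤ y ⬝ᵥ (A *ᵥ y) := by
    intro y hy j
    have h0 := psd_quad hA (g y j)
    rw [hgid y j hy] at h0
    linarith
  have hDv : ∀ (v : Fin n → ℝ) j, (Dhi *ᵥ v) j = (Real.sqrt (Ao j j))⁻¹ * v j := by
    intro v j
    rw [hDhi]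
    simp [Matrix.mulVec, dotProduct, Matrix.diagonal_apply, ite_mul, zero_mul]
  have hTsum : ∀ y, Inv y → (Dhi *ᵥ (A *ᵥ y)) ⬝ᵥ (Dhi *ᵥ (A *ᵥ y))
      = ∑ j ∈ Sᶜ, ((A *ᵥ y) j)^2 / Ao j j := by
    intro y hy
    have h0 : (Dhi *ᵥ (A *ᵥ y)) ⬝ᵥ (Dhi *ᵥ (A *ᵥ y))
        = ∑ j, ((Real.sqrt (Ao j j))⁻¹ * (A *ᵥ y) j) * ((Real.sqrt (Ao j j))⁻¹ * (A *ᵥ y) j) := by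
      simp [dotProduct, hDv]
    rw [h0]
    rw [← Finset.sum_subset (Finset.subset_univ (Sᶜ : Finset (Fin n)))
      (fun j _ hj => by
        have hjS : j ∈ S := by simpa using hj
        rw [hy j hjS, mul_zero, zero_mul])]
    apply Finset.sum_congr rfl
    intro j hj
    have hpos : 0 < Ao j j := (hdiag j).mpr (Finset.mem_compl.mp hj)
    have hinv2 : (Real.sqrt (Ao j j))⁻¹ * (Real.sqrt (Ao j j))⁻¹ = (Ao j j)⁻¹ := by
      rw [← mul_inv, Real.mul_self_sqrt (le_of_lt hpos)]
    rw [div_eq_mul_inv, ← hinv2]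
    ring
  have hsingle : ∀ y, Inv y → ∑ j, p j * ((g y j) ⬝ᵥ (A *ᵥ (g y j)))
      ≤ (1 - lam / ((n:ℝ) - d)) * (y ⬝ᵥ (A *ᵥ y)) := by
    intro y hy
    have hLHS : ∑ j, p j * ((g y j) ⬝ᵥ (A *ᵥ (g y j)))
        = ∑ j ∈ Sᶜ, ((n:ℝ)-d)⁻¹ * (y ⬝ᵥ (A *ᵥ y) - ((A *ᵥ y) j)^2 / Ao j j) := by
      rw [← Finset.sum_subset (Finset.subset_univ (Sᶜ : Finset (Fin n)))
        (fun j _ hj => by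
          have hjS : j ∈ S := by simpa using hj
          rw [hp j, if_neg (fun hpos => ((hdiag j).mp hpos) hjS), zero_mul])]
      apply Finset.sum_congr rfl
      intro j hj
      have hjS : j ∉ S := Finset.mem_compl.mp hj
      rw [hp j, if_pos ((hdiag j).mpr hjS), hgid y j hy]
    rw [hLHS]
    have hsum2 : ∑ j ∈ Sᶜ, ((n:ℝ)-d)⁻¹ * (y ⬝ᵥ (A *ᵥ y) - ((A *ᵥ y) j)^2 / Ao j j)
        = ((n:ℝ)-d)⁻¹ * (((Sᶜ : Finset (Fin n)).card : ℝ) * (y ⬝ᵥ (A *ᵥ y))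
            - ∑ j ∈ Sᶜ, ((A *ᵥ y) j)^2 / Ao j j) := by
      rw [← Finset.mul_sum, Finset.sum_sub_distrib, Finset.sum_const, nsmul_eq_mul]
    rw [hsum2, hcomplcast]
    have hQnn : 0 ≤ y ⬝ᵥ (A *ᵥ y) := psd_quad hA y
    by_cases hc : (n:ℝ) - d = 0
    · rw [hc, div_zero, sub_zero, _root_.inv_zero, zero_mul, one_mul]
      exact hQnn
    · have hpos : 0 < (n:ℝ) - d := lt_of_le_of_ne hnd0 (Ne.symm hc)
      have hTle : lam * (y ⬝ᵥ (A *ᵥ y)) ≤ ∑ j ∈ Sᶜ, ((A *ᵥ y) j)^2 / Ao j j := by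
        have h0 := hCORE y
        rw [hAoy y hy, hTsum y hy] at h0
        exact h0
      have step1 : ((n:ℝ)-d)⁻¹ * (((n:ℝ)-d) * (y ⬝ᵥ (A *ᵥ y))
            - ∑ j ∈ Sᶜ, ((A *ᵥ y) j)^2 / Ao j j)
          ≤ ((n:ℝ)-d)⁻¹ * (((n:ℝ)-d) * (y ⬝ᵥ (A *ᵥ y)) - lam * (y ⬝ᵥ (A *ᵥ y))) :=
        mul_le_mul_of_nonneg_left (by linarith) (inv_nonneg.mpr hnd0)
      have step2 : ((n:ℝ)-d)⁻¹ * (((n:ℝ)-d) * (y ⬝ᵥ (A *ᵥ y)) - lam * (y ⬝ᵥ (A *ᵥ y)))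
          = (1 - lam / ((n:ℝ) - d)) * (y ⬝ᵥ (A *ᵥ y)) := by
        field_simp
      linarith
  have hrho : 0 ≤ 1 - lam / ((n:ℝ) - d) := by
    by_cases hc : (n:ℝ) - d = 0
    · rw [hc, div_zero]
      norm_num
    · have hpos : 0 < (n:ℝ) - d := lt_of_le_of_ne hnd0 (Ne.symm hc)
      have hdn : d < n := by
        by_contra hcon
        have : n ≤ d := Nat.le_of_not_lt hcon
        have : (n:ℝ) ≤ (d:ℝ) := by exact_mod_cast this
        linarith
      have hSne : (Sᶜ : Finset (Fin n)).Nonempty := by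
        rw [← Finset.card_pos, hcompl]
        exact Nat.sub_pos_of_lt hdn
      obtain ⟨j0, hj0⟩ := hSne
      have hj0S : j0 ∉ S := Finset.mem_compl.mp hj0
      have hInvy0 : Inv (fun i => Pf i j0) := by
        intro s hs
        rw [hcolA j0]
        exact hrow s hs j0
      have hQ0 : (fun i => Pf i j0) ⬝ᵥ (A *ᵥ (fun i => Pf i j0)) = Ao j0 j0 := hePf j0
      have ha0 : 0 < Ao j0 j0 := (hdiag j0).mpr hj0S
      have hT0 : lam * Ao j0 j0
          ≤ ∑ j ∈ Sᶜ, ((A *ᵥ (fun i => Pf i j0)) j)^2 / Ao j j := by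
        have h0 := hCORE (fun i => Pf i j0)
        rw [hAoy _ hInvy0, hTsum _ hInvy0, hQ0] at h0
        exact h0
      have hT1 : ∑ j ∈ Sᶜ, ((A *ᵥ (fun i => Pf i j0)) j)^2 / Ao j j
          ≤ ((Sᶜ : Finset (Fin n)).card : ℝ) * Ao j0 j0 := by
        have h0 := Finset.sum_le_card_nsmul (Sᶜ : Finset (Fin n))
          (fun j => ((A *ᵥ (fun i => Pf i j0)) j)^2 / Ao j j) (Ao j0 j0)
          (fun j _ => by
            have := htermle (fun i => Pf i j0) hInvy0 j
            rw [hQ0] at this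
            exact this)
        simpa [nsmul_eq_mul] using h0
      rw [hcomplcast] at hT1
      have hlamle : lam ≤ (n:ℝ) - d := by
        have := le_trans hT0 hT1
        exact le_of_mul_le_mul_right (by linarith [this]) ha0
      have : lam / ((n:ℝ) - d) ≤ 1 := (div_le_one hpos).mpr hlamle
      linarith
  have hpnn : ∀ j, 0 ≤ p j := by
    intro j
    rw [hp j]
    by_cases h : 0 < Ao j j
    · rw [if_pos h]; exact inv_nonneg.mpr hnd0
    · rw [if_neg h]
  have hseq : ∀ (m : ℕ) (y : Fin n → ℝ), Inv y →
      ∑ J : Fin m → Fin n, (∏ t, p (J t)) *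
        ((List.foldl g y (List.ofFn J)) ⬝ᵥ (A *ᵥ (List.foldl g y (List.ofFn J))))
      ≤ (1 - lam / ((n:ℝ) - d)) ^ m * (y ⬝ᵥ (A *ᵥ y)) := by
    intro m
    induction m with
    | zero =>
      intro y hy
      simp
    | succ m ih =>
      intro y hy
      let E : (Fin n × (Fin m → Fin n)) ≃ (Fin (m+1) → Fin n) :=
        ⟨fun q => Fin.cons q.1 q.2, fun J => (J 0, fun i => J i.succ),
         fun q => by simp [Fin.cons_zero, Fin.cons_succ],
         fun J => by
           funext i
           refine Fin.cases ?_ ?_ i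
           · simp [Fin.cons_zero]
           · intro i2
             simp [Fin.cons_succ]⟩
      rw [← Equiv.sum_comp E (fun J : Fin (m+1) → Fin n => (∏ t, p (J t)) *
        ((List.foldl g y (List.ofFn J)) ⬝ᵥ (A *ᵥ (List.foldl g y (List.ofFn J)))))]
      rw [Fintype.sum_prod_type]
      have hterm : ∀ (j : Fin n) (J' : Fin m → Fin n),
          (∏ t, p ((E (j, J')) t)) = p j * ∏ t, p (J' t) := by
        intro j J'
        show (∏ t, p ((Fin.cons j J' : Fin (m+1) → Fin n) t)) = _
        rw [Fin.prod_univ_succ]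
        simp [Fin.cons_zero, Fin.cons_succ]
      have hfold : ∀ (j : Fin n) (J' : Fin m → Fin n),
          List.foldl g y (List.ofFn (E (j, J')))
          = List.foldl g (g y j) (List.ofFn J') := by
        intro j J'
        show List.foldl g y (List.ofFn (Fin.cons j J' : Fin (m+1) → Fin n)) = _
        rw [List.ofFn_succ]
        simp [Fin.cons_zero, Fin.cons_succ, List.foldl_cons]
      have hinner : ∀ j : Fin n,
          ∑ J' : Fin m → Fin n, (∏ t, p ((E (j, J')) t)) *
            ((List.foldl g y (List.ofFn (E (j, J')))) ⬝ᵥ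
              (A *ᵥ (List.foldl g y (List.ofFn (E (j, J'))))))
          ≤ p j * ((1 - lam / ((n:ℝ) - d)) ^ m * ((g y j) ⬝ᵥ (A *ᵥ (g y j)))) := by
        intro j
        have h1 : ∑ J' : Fin m → Fin n, (∏ t, p ((E (j, J')) t)) *
            ((List.foldl g y (List.ofFn (E (j, J')))) ⬝ᵥ
              (A *ᵥ (List.foldl g y (List.ofFn (E (j, J'))))))
            = p j * ∑ J' : Fin m → Fin n, (∏ t, p (J' t)) *
              ((List.foldl g (g y j) (List.ofFn J')) ⬝ᵥ
                (A *ᵥ (List.foldl g (g y j) (List.ofFn J')))) := by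
          rw [Finset.mul_sum]
          apply Finset.sum_congr rfl
          intro J' _
          rw [hterm, hfold]
          ring
        rw [h1]
        exact mul_le_mul_of_nonneg_left (ih (g y j) (hginv y j hy)) (hpnn j)
      calc ∑ j : Fin n, ∑ J' : Fin m → Fin n, (∏ t, p ((E (j, J')) t)) *
            ((List.foldl g y (List.ofFn (E (j, J')))) ⬝ᵥ
              (A *ᵥ (List.foldl g y (List.ofFn (E (j, J'))))))
          ≤ ∑ j : Fin n, p j * ((1 - lam / ((n:ℝ) - d)) ^ m * ((g y j) ⬝ᵥ (A *ᵥ (g y j)))) :=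
        Finset.sum_le_sum (fun j _ => hinner j)
      _ = (1 - lam / ((n:ℝ) - d)) ^ m * ∑ j : Fin n, p j * ((g y j) ⬝ᵥ (A *ᵥ (g y j))) := by
        rw [Finset.mul_sum]
        apply Finset.sum_congr rfl
        intro j _
        ring
      _ ≤ (1 - lam / ((n:ℝ) - d)) ^ m * ((1 - lam / ((n:ℝ) - d)) * (y ⬝ᵥ (A *ᵥ y))) :=
        mul_le_mul_of_nonneg_left (hsingle y hy) (pow_nonneg hrho m)
      _ = (1 - lam / ((n:ℝ) - d)) ^ (m+1) * (y ⬝ᵥ (A *ᵥ y)) := by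
        rw [pow_succ]
        ring
  -- block step facts
  set Ys : (Fin l → Fin n) → (Fin n → ℝ) → (Fin n → ℝ) :=
    fun J y => y - (Pf * eJ J) *ᵥ (pJ J *ᵥ (fun t => (A *ᵥ y) (J t))) with hYsdef
  have hMeqJ : ∀ J : Fin l → Fin n, (eJ J)ᵀ * Ao * eJ J = Ao.submatrix J J := by
    intro J
    rw [heJl, heJr]
    simp [Matrix.submatrix_submatrix]
  have hAPJ : ∀ J : Fin l → Fin n, A * (Pf * eJ J) = Ao * eJ J := by
    intro J
    rw [← Matrix.mul_assoc, hAPf]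
  have hPJtA : ∀ J : Fin l → Fin n, (Pf * eJ J)ᵀ * A = (eJ J)ᵀ * Ao := by
    intro J
    rw [Matrix.transpose_mul, Matrix.mul_assoc, hPftA]
  have hPtAP : ∀ J : Fin l → Fin n, (Pf * eJ J)ᵀ * A * (Pf * eJ J) = (eJ J)ᵀ * Ao * eJ J := by
    intro J
    rw [hPJtA J, Matrix.mul_assoc, ← Matrix.mul_assoc Ao Pf, hAoPf, ← Matrix.mul_assoc]
  have hMpsd : ∀ J : Fin l → Fin n, (Ao.submatrix J J).PosSemidef := by
    intro J
    rw [← hMeqJ J]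
    have h0 := psd_congr hAopsd (eJ J)ᵀ
    rwa [Matrix.transpose_transpose] at h0
  have hMsym : ∀ J : Fin l → Fin n, (Ao.submatrix J J)ᵀ = Ao.submatrix J J := by
    intro J
    rw [Matrix.transpose_submatrix, hAosym]
  have hMMdag : ∀ J : Fin l → Fin n,
      Ao.submatrix J J * pJ J * ((eJ J)ᵀ * Ao) = (eJ J)ᵀ * Ao := by
    intro J
    have hM0 : (1 - Ao.submatrix J J * pJ J) * (Ao.submatrix J J) = 0 := by
      rw [Matrix.sub_mul, Matrix.one_mul, (hpJ J).1, sub_self]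
    have hzero : ((1 - Ao.submatrix J J * pJ J) * (eJ J)ᵀ) * Ao *
        ((1 - Ao.submatrix J J * pJ J) * (eJ J)ᵀ)ᵀ = 0 := by
      have hKt : ((1 - Ao.submatrix J J * pJ J) * (eJ J)ᵀ)ᵀ
          = eJ J * (1 - Ao.submatrix J J * pJ J) := by
        rw [Matrix.transpose_mul, Matrix.transpose_transpose, Matrix.transpose_sub,
          Matrix.transpose_one, (hpJ J).2.2.1]
      rw [hKt]
      have step1 : (1 - Ao.submatrix J J * pJ J) * (eJ J)ᵀ * Ao *
          (eJ J * (1 - Ao.submatrix J J * pJ J))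
          = (1 - Ao.submatrix J J * pJ J) * (((eJ J)ᵀ * Ao * eJ J) *
            (1 - Ao.submatrix J J * pJ J)) := by
        simp only [Matrix.mul_assoc]
      rw [step1, hMeqJ J, ← Matrix.mul_assoc, hM0, Matrix.zero_mul]
    have hcancel := psd_cancel hAopsd _ hzero
    have h2 : (1 - Ao.submatrix J J * pJ J) * ((eJ J)ᵀ * Ao) = 0 := by
      rw [← Matrix.mul_assoc]
      exact hcancel
    rw [Matrix.sub_mul, Matrix.one_mul] at h2
    exact (sub_eq_zero.mp h2).symm
  have hMalpha : ∀ (J : Fin l → Fin n) (y : Fin n → ℝ), Inv y →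
      (Ao.submatrix J J) *ᵥ (pJ J *ᵥ (fun t => (A *ᵥ y) (J t)))
        = fun t => (A *ᵥ y) (J t) := by
    intro J y hy
    have h0 : (fun t => (A *ᵥ y) (J t)) = ((eJ J)ᵀ * Ao) *ᵥ y := by
      rw [← Matrix.mulVec_mulVec, hAoy y hy, heJv]
    rw [h0, Matrix.mulVec_mulVec, Matrix.mulVec_mulVec, ← Matrix.mul_assoc,
      Matrix.mul_assoc (Ao.submatrix J J * pJ J)]
    rw [hMMdag J]
  have hexpand : ∀ (J : Fin l → Fin n) (y : Fin n → ℝ) (β : Fin l → ℝ), Inv y →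
      (y - (Pf * eJ J) *ᵥ β) ⬝ᵥ (A *ᵥ (y - (Pf * eJ J) *ᵥ β))
      = y ⬝ᵥ (A *ᵥ y) - 2 * (β ⬝ᵥ (fun t => (A *ᵥ y) (J t)))
        + β ⬝ᵥ ((Ao.submatrix J J) *ᵥ β) := by
    intro J y β hy
    have hNt : ((Pf * eJ J) *ᵥ β) ⬝ᵥ (A *ᵥ y) = β ⬝ᵥ (fun t => (A *ᵥ y) (J t)) := by
      rw [dotshift, Matrix.mulVec_mulVec, hPJtA J, ← Matrix.mulVec_mulVec, hAoy y hy, heJv]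
    have hyN : y ⬝ᵥ (A *ᵥ ((Pf * eJ J) *ᵥ β)) = β ⬝ᵥ (fun t => (A *ᵥ y) (J t)) := by
      rw [hsymdot A hAsym, dotProduct_comm]
      exact hNt
    have hNN : ((Pf * eJ J) *ᵥ β) ⬝ᵥ (A *ᵥ ((Pf * eJ J) *ᵥ β))
        = β ⬝ᵥ ((Ao.submatrix J J) *ᵥ β) := by
      rw [dotshift, Matrix.mulVec_mulVec, Matrix.mulVec_mulVec, hPtAP J, hMeqJ J]
    simp only [Matrix.mulVec_sub, dotProduct_sub, sub_dotProduct]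
    rw [hNt, hyN, hNN]
    ring
  have hMdot : ∀ (J : Fin l → Fin n) (u v : Fin l → ℝ),
      u ⬝ᵥ ((Ao.submatrix J J) *ᵥ v) = v ⬝ᵥ ((Ao.submatrix J J) *ᵥ u) := by
    intro J u v
    rw [dotProduct_comm]
    have h0 := dotshift (Ao.submatrix J J) v u
    rw [hMsym J] at h0
    exact h0
  have hquad : ∀ (J : Fin l → Fin n) (y : Fin n → ℝ) (γ : Fin l → ℝ), Inv y →
      (Ys J y) ⬝ᵥ (A *ᵥ (Ys J y))
      ≤ (y - (Pf * eJ J) *ᵥ γ) ⬝ᵥ (A *ᵥ (y - (Pf * eJ J) *ᵥ γ)) := by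
    intro J y γ hy
    have hA1 : (Ys J y) ⬝ᵥ (A *ᵥ (Ys J y))
        = y ⬝ᵥ (A *ᵥ y)
          - 2 * ((pJ J *ᵥ (fun t => (A *ᵥ y) (J t))) ⬝ᵥ (fun t => (A *ᵥ y) (J t)))
          + (pJ J *ᵥ (fun t => (A *ᵥ y) (J t))) ⬝ᵥ
            ((Ao.submatrix J J) *ᵥ (pJ J *ᵥ (fun t => (A *ᵥ y) (J t)))) := by
      rw [hYsdef]
      exact hexpand J y _ hy
    have hA2 := hexpand J y γ hy
    rw [hA1, hA2]
    have hqd := psd_quad (hMpsd J)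
      (γ - (pJ J *ᵥ (fun t => (A *ᵥ y) (J t))))
    simp only [Matrix.mulVec_sub, dotProduct_sub, sub_dotProduct] at hqd
    have hr1 : γ ⬝ᵥ ((Ao.submatrix J J) *ᵥ (pJ J *ᵥ (fun t => (A *ᵥ y) (J t))))
        = γ ⬝ᵥ (fun t => (A *ᵥ y) (J t)) := by
      rw [hMalpha J y hy]
    have hr2 : (pJ J *ᵥ (fun t => (A *ᵥ y) (J t))) ⬝ᵥ ((Ao.submatrix J J) *ᵥ γ)
        = γ ⬝ᵥ (fun t => (A *ᵥ y) (J t)) := by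
      rw [hMdot J _ γ, hr1]
    have hr3 : (pJ J *ᵥ (fun t => (A *ᵥ y) (J t))) ⬝ᵥ
        ((Ao.submatrix J J) *ᵥ (pJ J *ᵥ (fun t => (A *ᵥ y) (J t))))
        = (pJ J *ᵥ (fun t => (A *ᵥ y) (J t))) ⬝ᵥ (fun t => (A *ᵥ y) (J t)) := by
      rw [hMalpha J y hy]
    rw [hr1, hr2, hr3] at hqd
    linarith
  have hYinv : ∀ (J : Fin l → Fin n) (y : Fin n → ℝ), Inv y → Inv (Ys J y) := by
    intro J y hy s hs
    rw [hYsdef]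
    have h0 : A *ᵥ ((Pf * eJ J) *ᵥ (pJ J *ᵥ (fun t => (A *ᵥ y) (J t))))
        = (Ao.submatrix id J) *ᵥ (pJ J *ᵥ (fun t => (A *ᵥ y) (J t))) := by
      rw [Matrix.mulVec_mulVec, hAPJ J, heJr]
    simp only [Matrix.mulVec_sub, Pi.sub_apply, h0]
    rw [hy s hs]
    have h1 : ((Ao.submatrix id J) *ᵥ (pJ J *ᵥ (fun t => (A *ᵥ y) (J t)))) s = 0 := by
      simp only [Matrix.mulVec, dotProduct, Matrix.submatrix_apply, id_eq]
      exact Finset.sum_eq_zero (fun t _ => by rw [hrow s hs (J t), zero_mul])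
    rw [h1, sub_zero]
  have hblock : ∀ (J : Fin l → Fin n) (y : Fin n → ℝ), Inv y →
      (Ys J y) ⬝ᵥ (A *ᵥ (Ys J y))
      ≤ (List.foldl g y (List.ofFn J)) ⬝ᵥ (A *ᵥ (List.foldl g y (List.ofFn J))) := by
    intro J y hy
    have hrep : ∀ (L : List (Fin n)) (z : Fin n → ℝ) (δ : Fin l → ℝ),
        (∀ a ∈ L, ∃ t, J t = a) → z = y - (Pf * eJ J) *ᵥ δ →
        ∃ γ, List.foldl g z L = y - (Pf * eJ J) *ᵥ γ := by
      intro L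
      induction L with
      | nil =>
        intro z δ _ hz
        exact ⟨δ, by simpa using hz⟩
      | cons a L ihL =>
        intro z δ hmem hz
        obtain ⟨t0, ht0⟩ := hmem a List.mem_cons_self
        have hcol0 : (fun i => Pf i a) = (Pf * eJ J) *ᵥ (Pi.single t0 1) := by
          funext i
          rw [← ht0]
          simp [Matrix.mulVec, dotProduct, Matrix.mul_apply, heJ, Pi.single_apply]
        rw [List.foldl_cons]
        apply ihL (g z a) (δ + ((A *ᵥ z) a / Ao a a) • (Pi.single t0 1 : Fin l → ℝ))
          (fun x hx => hmem x (List.mem_cons_of_mem a hx))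
        rw [hgdef]
        simp only []
        rw [Matrix.mulVec_add, Matrix.mulVec_smul, ← hcol0, hz, sub_sub]
    obtain ⟨γ, hγ⟩ := hrep (List.ofFn J) y 0
      (fun a ha => by
        rcases List.mem_ofFn.mp ha with ⟨t, ht⟩
        exact ⟨t, ht⟩)
      (by simp)
    rw [hγ]
    exact hquad J y γ hy
  have honestep : ∀ y : Fin n → ℝ, Inv y →
      ∑ J : Fin l → Fin n, (∏ t, p (J t)) * ((Ys J y) ⬝ᵥ (A *ᵥ (Ys J y)))
      ≤ (1 - lam / ((n:ℝ) - d)) ^ l * (y ⬝ᵥ (A *ᵥ y)) := by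
    intro y hy
    calc ∑ J : Fin l → Fin n, (∏ t, p (J t)) * ((Ys J y) ⬝ᵥ (A *ᵥ (Ys J y)))
        ≤ ∑ J : Fin l → Fin n, (∏ t, p (J t)) *
          ((List.foldl g y (List.ofFn J)) ⬝ᵥ (A *ᵥ (List.foldl g y (List.ofFn J)))) :=
      Finset.sum_le_sum (fun J _ => mul_le_mul_of_nonneg_left (hblock J y hy)
        (Finset.prod_nonneg (fun t _ => hpnn (J t))))
    _ ≤ _ := hseq l y hy
  have hstepY : ∀ (J : Fin l → Fin n) (x : Fin n → ℝ),
      step J x - xstar = Ys J (x - xstar) := by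
    intro J x
    have hr : A *ᵥ x - b = A *ᵥ (x - xstar) := by
      rw [Matrix.mulVec_sub, hxstar]
    have hCsub : C.submatrix id J = C * eJ J := (heJr C J).symm
    rw [hstep J x, hYsdef]
    simp only [hr]
    rw [hCsub, Matrix.mulVec_mulVec]
    have hPfeJ : Pf * eJ J = eJ J - eS * (C * eJ J) := by
      rw [hPfdef, Matrix.sub_mul, Matrix.one_mul, Matrix.mul_assoc]
    rw [hPfeJ, Matrix.sub_mulVec]
    simp only [← Matrix.mulVec_mulVec]
    abel
  have hInvTraj : ∀ (k : ℕ) (ω : Fin k → (Fin l → Fin n)),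
      Inv (traj step x0 k ω - xstar) := by
    intro k
    induction k with
    | zero =>
      intro ω s hs
      show (A *ᵥ (x0 - xstar)) s = 0
      rw [Matrix.mulVec_sub, hxstar]
      have h0 := congrFun hx0 ⟨s, hs⟩
      have h1 : (A.submatrix (fun j : {j // j ∈ S} => (j : Fin n)) id *ᵥ x0) ⟨s, hs⟩
          = (A *ᵥ x0) s := by
        simp [Matrix.mulVec, dotProduct, Matrix.submatrix_apply]
      rw [h1] at h0
      simp [Pi.sub_apply, h0]
    | succ k ih =>
      intro ω
      show Inv (step (ω (Fin.last k)) (traj step x0 k (Fin.init ω)) - xstar)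
      rw [hstepY]
      exact hYinv _ _ (ih (Fin.init ω))
  intro k
  induction k with
  | zero =>
    simp [traj]
  | succ k ih =>
    let E2 : ((Fin k → (Fin l → Fin n)) × (Fin l → Fin n)) ≃ (Fin (k+1) → (Fin l → Fin n)) :=
      ⟨fun q => Fin.snoc q.1 q.2, fun ω => (Fin.init ω, ω (Fin.last k)),
       fun q => by simp, fun ω => by simp⟩
    rw [← Equiv.sum_comp E2 (fun ω : Fin (k+1) → (Fin l → Fin n) =>
      (∏ i, ∏ t, p (ω i t)) * ((traj step x0 (k+1) ω - xstar) ⬝ᵥ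
        (A *ᵥ (traj step x0 (k+1) ω - xstar))))]
    rw [Fintype.sum_prod_type]
    have hsnocW : ∀ (ω : Fin k → (Fin l → Fin n)) (a : Fin l → Fin n),
        (∏ i, ∏ t, p ((E2 (ω, a)) i t)) = (∏ i, ∏ t, p (ω i t)) * (∏ t, p (a t)) := by
      intro ω a
      show (∏ i : Fin (k+1), ∏ t, p ((Fin.snoc ω a : Fin (k+1) → (Fin l → Fin n)) i t)) = _
      rw [Fin.prod_univ_castSucc]
      simp [Fin.snoc_castSucc, Fin.snoc_last]
    have htrajsnoc : ∀ (ω : Fin k → (Fin l → Fin n)) (a : Fin l → Fin n),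
        traj step x0 (k+1) (E2 (ω, a)) = step a (traj step x0 k ω) := by
      intro ω a
      show traj step x0 (k+1) (Fin.snoc ω a) = _
      simp only [traj, Fin.snoc_last, Fin.init_snoc]
    have hper : ∀ ω : Fin k → (Fin l → Fin n),
        ∑ a : Fin l → Fin n, (∏ i, ∏ t, p ((E2 (ω, a)) i t)) *
          ((traj step x0 (k+1) (E2 (ω, a)) - xstar) ⬝ᵥ
            (A *ᵥ (traj step x0 (k+1) (E2 (ω, a)) - xstar)))
        ≤ (∏ i, ∏ t, p (ω i t)) * ((1 - lam / ((n:ℝ) - d)) ^ l *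
            ((traj step x0 k ω - xstar) ⬝ᵥ (A *ᵥ (traj step x0 k ω - xstar)))) := by
      intro ω
      have h1 : ∑ a : Fin l → Fin n, (∏ i, ∏ t, p ((E2 (ω, a)) i t)) *
          ((traj step x0 (k+1) (E2 (ω, a)) - xstar) ⬝ᵥ
            (A *ᵥ (traj step x0 (k+1) (E2 (ω, a)) - xstar)))
          = (∏ i, ∏ t, p (ω i t)) * ∑ a : Fin l → Fin n, (∏ t, p (a t)) *
            ((Ys a (traj step x0 k ω - xstar)) ⬝ᵥ
              (A *ᵥ (Ys a (traj step x0 k ω - xstar)))) := by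
        rw [Finset.mul_sum]
        apply Finset.sum_congr rfl
        intro a _
        rw [hsnocW, htrajsnoc, hstepY]
        ring
      rw [h1]
      exact mul_le_mul_of_nonneg_left (honestep _ (hInvTraj k ω))
        (Finset.prod_nonneg (fun i _ => Finset.prod_nonneg (fun t _ => hpnn (ω i t))))
    calc ∑ ω : Fin k → (Fin l → Fin n), ∑ a : Fin l → Fin n,
          (∏ i, ∏ t, p ((E2 (ω, a)) i t)) *
          ((traj step x0 (k+1) (E2 (ω, a)) - xstar) ⬝ᵥ
            (A *ᵥ (traj step x0 (k+1) (E2 (ω, a)) - xstar)))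
        ≤ ∑ ω : Fin k → (Fin l → Fin n), (∏ i, ∏ t, p (ω i t)) *
          ((1 - lam / ((n:ℝ) - d)) ^ l *
            ((traj step x0 k ω - xstar) ⬝ᵥ (A *ᵥ (traj step x0 k ω - xstar)))) :=
      Finset.sum_le_sum (fun ω _ => hper ω)
    _ = (1 - lam / ((n:ℝ) - d)) ^ l * ∑ ω : Fin k → (Fin l → Fin n),
          (∏ i, ∏ t, p (ω i t)) *
          ((traj step x0 k ω - xstar) ⬝ᵥ (A *ᵥ (traj step x0 k ω - xstar))) := by
      rw [Finset.mul_sum]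
      apply Finset.sum_congr rfl
      intro ω _
      ring
    _ ≤ (1 - lam / ((n:ℝ) - d)) ^ l * ((1 - lam / ((n:ℝ) - d)) ^ (k * l) *
          ((x0 - xstar) ⬝ᵥ (A *ᵥ (x0 - xstar)))) :=
      mul_le_mul_of_nonneg_left ih (pow_nonneg hrho l)
    _ = (1 - lam / ((n:ℝ) - d)) ^ ((k+1) * l) *
          ((x0 - xstar) ⬝ᵥ (A *ᵥ (x0 - xstar))) := by
      rw [add_mul, one_mul, pow_add]
      ring
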